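/- Let G be a finite simple graph, x an isolated vertex of G, and Ĝ = G \ x the graph obtained by deleting x. Then for each positive integer k, the k-th symbolic power of I_c(G) equals the k-th ordinary power of I_c(G) if and only if the k-th symbolic power of I_c(Ĝ) equals the k-th ordinary power of I_c(Ĝ). -/

import Mathlib

open MvPolynomial

noncomputable def symbPow {R : Type*} [CommRing R] (I : Ideal R) (k : ℕ) : Ideal R :=
  ⨅ p ∈ I.minimalPrimes, p ^ k

noncomputable def compIdeal {V : Type*} [Fintype V] [DecidableEq V]
    (K : Type*) [Field K] (G : SimpleGraph V) : Ideal (MvPolynomial V K) :=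
  Ideal.span {m | ∃ i j, G.Adj i j ∧ m = ∏ l ∈ Finset.univ \ {i, j}, X l}

section Transfer

variable {A B : Type*} [CommRing A] [CommRing B]

lemma aux_map_eq_comap (f : A ≃+* B) (I : Ideal A) :
    Ideal.map (f : A →+* B) I = Ideal.comap (f.symm : B →+* A) I := by
  refine le_antisymm (Ideal.map_le_iff_le_comap.mpr fun x hx => ?_) (fun x hx => ?_)
  · simpa using hx
  · have : x = f (f.symm x) := (f.apply_symm_apply x).symm
    rw [this]
    exact Ideal.mem_map_of_mem _ hx

lemma aux_map_iInf {ι : Sort*} (f : A ≃+* B) (J : ι → Ideal A) :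
    Ideal.map (f : A →+* B) (⨅ i, J i) = ⨅ i, Ideal.map (f : A →+* B) (J i) := by
  simp only [aux_map_eq_comap f]
  exact Ideal.comap_iInf _ _

lemma aux_minimalPrimes_map (f : A ≃+* B) (I : Ideal A) :
    (Ideal.map (f : A →+* B) I).minimalPrimes
      = Ideal.map (f : A →+* B) '' I.minimalPrimes := by
  have h := Ideal.comap_minimalPrimes_eq_of_surjective (f := (f : A →+* B))
      (by exact f.surjective) (Ideal.map (f : A →+* B) I)
  rw [Ideal.comap_map_of_bijective (f : A →+* B) (by exact f.bijective)] at h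
  rw [h, Set.image_image]
  have : ∀ q : Ideal B, Ideal.map (f : A →+* B) (Ideal.comap (f : A →+* B) q) = q :=
    fun q => Ideal.map_comap_of_surjective _ f.surjective q
  simp [this]

lemma aux_symbPow_map (f : A ≃+* B) (I : Ideal A) (k : ℕ) :
    symbPow (Ideal.map (f : A →+* B) I) k = Ideal.map (f : A →+* B) (symbPow I k) := by
  rw [symbPow, symbPow, aux_minimalPrimes_map, iInf_image]
  rw [aux_map_iInf]
  refine iInf_congr fun p => ?_
  rw [aux_map_iInf]
  exact iInf_congr fun hp => (Ideal.map_pow _ _ _).symm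

lemma aux_symbPow_eq_pow_iff (f : A ≃+* B) (I : Ideal A) (k : ℕ) :
    symbPow (Ideal.map (f : A →+* B) I) k = (Ideal.map (f : A →+* B) I) ^ k ↔
      symbPow I k = I ^ k := by
  rw [aux_symbPow_map, ← Ideal.map_pow]
  constructor
  · intro h
    have h2 := congrArg (Ideal.comap (f : A →+* B)) h
    rwa [Ideal.comap_map_of_bijective (f : A →+* B) (by exact f.bijective),
      Ideal.comap_map_of_bijective (f : A →+* B) (by exact f.bijective)] at h2
  · intro h; rw [h]

end Transfer

section Poly

variable {R : Type*} [CommRing R] [IsDomain R]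

set_option linter.unusedSectionVars false

open Polynomial

lemma aux_comap_C_map_C (J : Ideal R) :
    Ideal.comap (Polynomial.C : R →+* R[X]) (Ideal.map (Polynomial.C : R →+* R[X]) J) = J := by
  ext r
  simp only [Ideal.mem_comap, Ideal.mem_map_C_iff]
  constructor
  · intro h
    simpa using h 0
  · intro hr m
    cases m with
    | zero => simpa using hr
    | succ m => simp

lemma aux_map_C_inj {J J' : Ideal R}
    (h : Ideal.map (Polynomial.C : R →+* R[X]) J = Ideal.map (Polynomial.C : R →+* R[X]) J') :
    J = J' := by
  rw [← aux_comap_C_map_C J, ← aux_comap_C_map_C J', h]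

lemma aux_map_C_iInf {ι : Sort*} (J : ι → Ideal R) :
    Ideal.map (Polynomial.C : R →+* R[X]) (⨅ i, J i)
      = ⨅ i, Ideal.map (Polynomial.C : R →+* R[X]) (J i) := by
  ext f
  simp only [Ideal.mem_map_C_iff, Ideal.mem_iInf]
  exact forall_comm

lemma aux_minimalPrimes_map_C (J : Ideal R) :
    (Ideal.map (Polynomial.C : R →+* R[X]) J).minimalPrimes
      = (fun p => Ideal.map (Polynomial.C : R →+* R[X]) p) '' J.minimalPrimes := by
  ext q
  constructor
  · rintro ⟨⟨hq, hJq⟩, hmin⟩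
    set p := Ideal.comap (Polynomial.C : R →+* R[X]) q with hp
    have hpprime : p.IsPrime := Ideal.comap_isPrime (Polynomial.C : R →+* R[X]) q (H := hq)
    have hJp : J ≤ p := Ideal.map_le_iff_le_comap.mp hJq
    have hCpq : Ideal.map (Polynomial.C : R →+* R[X]) p ≤ q :=
      Ideal.map_le_iff_le_comap.mpr le_rfl
    have hCp : (Ideal.map (Polynomial.C : R →+* R[X]) p).IsPrime :=
      (by haveI := hpprime; exact Ideal.isPrime_map_C_of_isPrime)
    have hq_eq : q = Ideal.map (Polynomial.C : R →+* R[X]) p :=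
      le_antisymm (hmin ⟨hCp, Ideal.map_mono hJp⟩ hCpq) hCpq
    refine ⟨p, ⟨⟨hpprime, hJp⟩, ?_⟩, hq_eq.symm⟩
    rintro p' ⟨hp', hJp'⟩ hle
    have h1 : Ideal.map (Polynomial.C : R →+* R[X]) p' ≤ q :=
      hq_eq ▸ Ideal.map_mono hle
    have h2 : q ≤ Ideal.map (Polynomial.C : R →+* R[X]) p' :=
      hmin ⟨(by haveI := hp'; exact Ideal.isPrime_map_C_of_isPrime), Ideal.map_mono hJp'⟩ h1
    calc p = Ideal.comap (Polynomial.C : R →+* R[X]) q := hp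
    _ ≤ Ideal.comap (Polynomial.C : R →+* R[X])
          (Ideal.map (Polynomial.C : R →+* R[X]) p') := Ideal.comap_mono h2
    _ = p' := aux_comap_C_map_C p'
  · rintro ⟨p, ⟨⟨hpprime, hJp⟩, hmin⟩, rfl⟩
    refine ⟨⟨(by haveI := hpprime; exact Ideal.isPrime_map_C_of_isPrime), Ideal.map_mono hJp⟩, ?_⟩
    rintro q ⟨hq, hJq⟩ hle
    have hJp' : J ≤ Ideal.comap (Polynomial.C : R →+* R[X]) q :=
      Ideal.map_le_iff_le_comap.mp hJq
    have hq' : (Ideal.comap (Polynomial.C : R →+* R[X]) q).IsPrime :=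
      Ideal.comap_isPrime (Polynomial.C : R →+* R[X]) q (H := hq)
    have hle' : Ideal.comap (Polynomial.C : R →+* R[X]) q ≤ p := by
      calc Ideal.comap (Polynomial.C : R →+* R[X]) q
          ≤ Ideal.comap (Polynomial.C : R →+* R[X])
              (Ideal.map (Polynomial.C : R →+* R[X]) p) := Ideal.comap_mono hle
        _ = p := aux_comap_C_map_C p
    have : p ≤ Ideal.comap (Polynomial.C : R →+* R[X]) q := hmin ⟨hq', hJp'⟩ hle'
    exact Ideal.map_le_iff_le_comap.mpr this

lemma aux_spanX_isPrime : (Ideal.span {(Polynomial.X : R[X])}).IsPrime :=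
  (Ideal.span_singleton_prime Polynomial.X_ne_zero).mpr Polynomial.prime_X

lemma aux_X_not_mem_map_C {p : Ideal R} (hp : p.IsPrime) :
    (Polynomial.X : R[X]) ∉ Ideal.map (Polynomial.C : R →+* R[X]) p := by
  intro h
  have := Ideal.mem_map_C_iff.mp h 1
  simp only [Polynomial.coeff_X_one] at this
  exact hp.ne_top (Ideal.eq_top_of_isUnit_mem _ this isUnit_one)

lemma aux_map_C_not_le_spanX {J : Ideal R} (hJ : J ≠ ⊥) :
    ¬ Ideal.map (Polynomial.C : R →+* R[X]) J ≤ Ideal.span {(Polynomial.X : R[X])} := by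
  intro h
  obtain ⟨a, haJ, ha⟩ := Submodule.exists_mem_ne_zero_of_ne_bot hJ
  have hCa : (Polynomial.C a : R[X]) ∈ Ideal.span {(Polynomial.X : R[X])} :=
    h (Ideal.mem_map_of_mem _ haJ)
  obtain ⟨g, hg⟩ := Ideal.mem_span_singleton'.mp hCa
  apply ha
  have := congrArg (fun f => Polynomial.coeff f 0) hg
  simpa [Polynomial.mul_coeff_zero] using this.symm

lemma aux_minimalPrimes_X_mul {J : Ideal R} (hJ : J ≠ ⊥) :
    (Ideal.span {(Polynomial.X : R[X])} * Ideal.map (Polynomial.C : R →+* R[X]) J).minimalPrimes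
      = insert (Ideal.span {(Polynomial.X : R[X])})
          ((fun p => Ideal.map (Polynomial.C : R →+* R[X]) p) '' J.minimalPrimes) := by
  set P := Ideal.span {(Polynomial.X : R[X])} * Ideal.map (Polynomial.C : R →+* R[X]) J with hP
  have hPX : P ≤ Ideal.span {(Polynomial.X : R[X])} := Ideal.mul_le_left
  have hPJ : P ≤ Ideal.map (Polynomial.C : R →+* R[X]) J := Ideal.mul_le_right
  ext q
  constructor
  · rintro ⟨⟨hq, hPq⟩, hmin⟩
    rcases (Ideal.IsPrime.mul_le hq).mp hPq with hXq | hJq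
    · left
      exact le_antisymm (hmin ⟨aux_spanX_isPrime, hPX⟩ hXq) hXq
    · right
      set p := Ideal.comap (Polynomial.C : R →+* R[X]) q with hp
      have hpprime : p.IsPrime := Ideal.comap_isPrime (Polynomial.C : R →+* R[X]) q (H := hq)
      have hJp : J ≤ p := Ideal.map_le_iff_le_comap.mp hJq
      have hCpq : Ideal.map (Polynomial.C : R →+* R[X]) p ≤ q :=
        Ideal.map_le_iff_le_comap.mpr le_rfl
      have hq_eq : q = Ideal.map (Polynomial.C : R →+* R[X]) p :=
        le_antisymm (hmin ⟨(by haveI := hpprime; exact Ideal.isPrime_map_C_of_isPrime),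
          hPJ.trans (Ideal.map_mono hJp)⟩ hCpq) hCpq
      refine ⟨p, ⟨⟨hpprime, hJp⟩, ?_⟩, hq_eq.symm⟩
      rintro p' ⟨hp', hJp'⟩ hle
      have h1 : Ideal.map (Polynomial.C : R →+* R[X]) p' ≤ q :=
        hq_eq ▸ Ideal.map_mono hle
      have h2 : q ≤ Ideal.map (Polynomial.C : R →+* R[X]) p' :=
        hmin ⟨(by haveI := hp'; exact Ideal.isPrime_map_C_of_isPrime),
          hPJ.trans (Ideal.map_mono hJp')⟩ h1
      calc p = Ideal.comap (Polynomial.C : R →+* R[X]) q := hp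
      _ ≤ Ideal.comap (Polynomial.C : R →+* R[X])
            (Ideal.map (Polynomial.C : R →+* R[X]) p') := Ideal.comap_mono h2
      _ = p' := aux_comap_C_map_C p'
  · rintro (rfl | ⟨p, hpmin, rfl⟩)
    · refine ⟨⟨aux_spanX_isPrime, hPX⟩, ?_⟩
      rintro q ⟨hq, hPq⟩ hle
      rcases (Ideal.IsPrime.mul_le hq).mp hPq with hXq | hJq
      · exact hXq
      · exact absurd (hJq.trans hle) (aux_map_C_not_le_spanX hJ)
    · obtain ⟨⟨hpprime, hJp⟩, hmin⟩ := hpmin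
      refine ⟨⟨(by haveI := hpprime; exact Ideal.isPrime_map_C_of_isPrime),
        hPJ.trans (Ideal.map_mono hJp)⟩, ?_⟩
      rintro q ⟨hq, hPq⟩ hle
      rcases (Ideal.IsPrime.mul_le hq).mp hPq with hXq | hJq
      · exact absurd (hle (hXq (Ideal.mem_span_singleton_self _)))
          (aux_X_not_mem_map_C hpprime)
      · have hq' : (Ideal.comap (Polynomial.C : R →+* R[X]) q).IsPrime :=
          Ideal.comap_isPrime (Polynomial.C : R →+* R[X]) q (H := hq)
        have hJq' : J ≤ Ideal.comap (Polynomial.C : R →+* R[X]) q :=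
          Ideal.map_le_iff_le_comap.mp hJq
        have hle' : Ideal.comap (Polynomial.C : R →+* R[X]) q ≤ p :=
          (Ideal.comap_mono hle).trans (aux_comap_C_map_C p).le
        exact Ideal.map_le_iff_le_comap.mpr (hmin ⟨hq', hJq'⟩ hle')

lemma aux_spanXpow_inf_map_C (A : Ideal R) (k : ℕ) :
    Ideal.span {(Polynomial.X : R[X]) ^ k} ⊓ Ideal.map (Polynomial.C : R →+* R[X]) A
      = Ideal.span {(Polynomial.X : R[X]) ^ k} * Ideal.map (Polynomial.C : R →+* R[X]) A := by
  refine le_antisymm (fun f hf => ?_) Ideal.mul_le_inf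
  obtain ⟨hf1, hf2⟩ := hf
  obtain ⟨g, hg⟩ := Ideal.mem_span_singleton'.mp hf1
  have hgA : g ∈ Ideal.map (Polynomial.C : R →+* R[X]) A := by
    rw [Ideal.mem_map_C_iff]
    intro d
    have : f.coeff (d + k) ∈ A := Ideal.mem_map_C_iff.mp hf2 (d + k)
    rwa [← hg, mul_comm g, Polynomial.coeff_X_pow_mul] at this
  exact Ideal.mem_span_singleton_mul.mpr ⟨g, hgA, by rw [← hg, mul_comm]⟩

lemma aux_span_mul_cancel {S : Type*} [CommRing S] [IsDomain S] {x : S} (hx : x ≠ 0)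
    {I I' : Ideal S} (h : Ideal.span {x} * I = Ideal.span {x} * I') : I = I' := by
  have key : ∀ {I I' : Ideal S}, Ideal.span {x} * I ≤ Ideal.span {x} * I' → I ≤ I' := by
    intro I I' hle a ha
    have : x * a ∈ Ideal.span {x} * I' :=
      hle (Ideal.mem_span_singleton_mul.mpr ⟨a, ha, rfl⟩)
    obtain ⟨b, hb, hba⟩ := Ideal.mem_span_singleton_mul.mp this
    rwa [← mul_left_cancel₀ hx hba]
  exact le_antisymm (key h.le) (key h.ge)

lemma aux_minimalPrimes_bot {S : Type*} [CommRing S] [IsDomain S] :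
    (⊥ : Ideal S).minimalPrimes = {⊥} := by
  ext p
  simp only [Ideal.minimalPrimes, Set.mem_setOf_eq, Set.mem_singleton_iff]
  constructor
  · rintro ⟨⟨hp, -⟩, hmin⟩
    exact le_antisymm (hmin ⟨Ideal.bot_prime, le_rfl⟩ bot_le) bot_le
  · rintro rfl
    exact ⟨⟨Ideal.bot_prime, le_rfl⟩, fun q _ _ => bot_le⟩

lemma aux_symbPow_bot {S : Type*} [CommRing S] [IsDomain S] {k : ℕ} (hk : 0 < k) :
    symbPow (⊥ : Ideal S) k = ⊥ := by
  rw [symbPow, aux_minimalPrimes_bot, iInf_singleton, ← Ideal.zero_eq_bot, zero_pow hk.ne']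

lemma aux_key (J : Ideal R) (k : ℕ) (hk : 0 < k) :
    (symbPow (Ideal.span {(Polynomial.X : R[X])} * Ideal.map (Polynomial.C : R →+* R[X]) J) k
        = (Ideal.span {(Polynomial.X : R[X])} * Ideal.map (Polynomial.C : R →+* R[X]) J) ^ k)
      ↔ symbPow J k = J ^ k := by
  by_cases hJ : J = ⊥
  · subst hJ
    have h1 : (⊥ : Ideal R[X]) ^ k = ⊥ := by rw [← Ideal.zero_eq_bot]; exact zero_pow hk.ne'
    have h2 : (⊥ : Ideal R) ^ k = ⊥ := by rw [← Ideal.zero_eq_bot]; exact zero_pow hk.ne'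
    rw [Ideal.map_bot, Ideal.mul_bot, aux_symbPow_bot hk, aux_symbPow_bot hk, h1, h2]
    simp
  · have hsymb : symbPow (Ideal.span {(Polynomial.X : R[X])}
        * Ideal.map (Polynomial.C : R →+* R[X]) J) k
        = Ideal.span {(Polynomial.X : R[X]) ^ k}
            * Ideal.map (Polynomial.C : R →+* R[X]) (symbPow J k) := by
      rw [symbPow, aux_minimalPrimes_X_mul hJ, iInf_insert, iInf_image]
      have : (⨅ p ∈ J.minimalPrimes, (Ideal.map (Polynomial.C : R →+* R[X]) p) ^ k)
          = Ideal.map (Polynomial.C : R →+* R[X]) (symbPow J k) := by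
        rw [symbPow, aux_map_C_iInf]
        refine iInf_congr fun p => ?_
        rw [aux_map_C_iInf]
        exact iInf_congr fun hp => (Ideal.map_pow _ _ _).symm
      rw [this, Ideal.span_singleton_pow, aux_spanXpow_inf_map_C]
    have hpow : (Ideal.span {(Polynomial.X : R[X])}
        * Ideal.map (Polynomial.C : R →+* R[X]) J) ^ k
        = Ideal.span {(Polynomial.X : R[X]) ^ k}
            * Ideal.map (Polynomial.C : R →+* R[X]) (J ^ k) := by
      rw [mul_pow, Ideal.span_singleton_pow, Ideal.map_pow]
    rw [hsymb, hpow]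
    constructor
    · intro h
      exact aux_map_C_inj (aux_span_mul_cancel (pow_ne_zero k Polynomial.X_ne_zero) h)
    · intro h; rw [h]

end Poly

section Graph

variable {n : ℕ} (K : Type*) [Field K]

noncomputable def myE (n : ℕ) (K : Type*) [Field K] :
    MvPolynomial (Fin (n + 1)) K ≃+* Polynomial (MvPolynomial (Fin n) K) :=
  ((renameEquiv K (finRotate (n + 1))).trans (finSuccEquiv K n)).toRingEquiv

lemma myE_X_last : myE n K (X (Fin.last n)) = Polynomial.X := by
  simp [myE, finRotate_last, finSuccEquiv_X_zero]

lemma myE_X_castSucc (i : Fin n) : myE n K (X i.castSucc) = Polynomial.C (X i) := by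
  simp [myE, Fin.coeSucc_eq_succ, finSuccEquiv_X_succ]

lemma aux_sdiff (i j : Fin n) :
    (Finset.univ \ {i.castSucc, j.castSucc} : Finset (Fin (n + 1)))
      = insert (Fin.last n) ((Finset.univ \ {i, j}).image Fin.castSucc) := by
  ext x
  induction x using Fin.lastCases with
  | last => simp [(Fin.castSucc_lt_last i).ne', (Fin.castSucc_lt_last j).ne',
      (Fin.castSucc_lt_last _).ne]
  | cast y => simp [Fin.castSucc_inj, (Fin.castSucc_lt_last y).ne]

lemma aux_e_prod (i j : Fin n) :
    myE n K (∏ l ∈ Finset.univ \ {i.castSucc, j.castSucc}, X l)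
      = Polynomial.X * Polynomial.C (∏ l ∈ Finset.univ \ {i, j}, X l) := by
  have hlast : Fin.last n ∉ (Finset.univ \ {i, j}).image Fin.castSucc := by
    simp [(Fin.castSucc_lt_last _).ne]
  rw [map_prod, aux_sdiff, Finset.prod_insert hlast,
    Finset.prod_image (fun a _ b _ h => Fin.castSucc_injective n h), myE_X_last]
  have hc : ∀ l ∈ Finset.univ \ {i, j}, myE n K (X l.castSucc) = Polynomial.C (X l) :=
    fun l _ => myE_X_castSucc K l
  rw [Finset.prod_congr rfl hc, ← map_prod]

lemma aux_map_compIdeal (G : SimpleGraph (Fin (n + 1)))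
    (hx : ∀ y, ¬ G.Adj (Fin.last n) y)
    (Ghat : SimpleGraph (Fin n))
    (hGhat : ∀ i j : Fin n, Ghat.Adj i j ↔ G.Adj i.castSucc j.castSucc) :
    Ideal.map (myE n K : MvPolynomial (Fin (n + 1)) K →+* Polynomial (MvPolynomial (Fin n) K))
        (compIdeal K G)
      = Ideal.span {(Polynomial.X : Polynomial (MvPolynomial (Fin n) K))}
          * Ideal.map (Polynomial.C : MvPolynomial (Fin n) K →+* Polynomial (MvPolynomial (Fin n) K))
              (compIdeal K Ghat) := by
  rw [compIdeal, compIdeal, Ideal.map_span, Ideal.map_span, Ideal.span_mul_span']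
  congr 1
  ext m'
  constructor
  · rintro ⟨m, ⟨i, j, hadj, rfl⟩, rfl⟩
    have hi : i ≠ Fin.last n := by rintro rfl; exact hx j hadj
    have hj : j ≠ Fin.last n := by rintro rfl; exact hx i hadj.symm
    obtain ⟨i', rfl⟩ := Fin.exists_castSucc_eq.mpr hi
    obtain ⟨j', rfl⟩ := Fin.exists_castSucc_eq.mpr hj
    have he : (myE n K : MvPolynomial (Fin (n + 1)) K →+* Polynomial (MvPolynomial (Fin n) K))
        (∏ l ∈ Finset.univ \ {i'.castSucc, j'.castSucc}, X l)
        = Polynomial.X * Polynomial.C (∏ l ∈ Finset.univ \ {i', j'}, X l) :=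
      aux_e_prod K i' j'
    rw [he]
    exact Set.mul_mem_mul rfl
      ⟨∏ l ∈ Finset.univ \ {i', j'}, X l, ⟨i', j', (hGhat i' j').mpr hadj, rfl⟩, rfl⟩
  · rintro ⟨a, ha, b, ⟨m, ⟨i, j, hadj, rfl⟩, rfl⟩, rfl⟩
    rw [Set.mem_singleton_iff] at ha
    subst ha
    exact ⟨∏ l ∈ Finset.univ \ {i.castSucc, j.castSucc}, X l,
      ⟨i.castSucc, j.castSucc, (hGhat i j).mp hadj, rfl⟩, aux_e_prod K i j⟩

end Graph

/-- If `x` (here the vertex `Fin.last n`) is an isolated vertex of `G` and `Ĝ = G \ x`,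
then `I_c(G)^(k) = I_c(G)^k` iff `I_c(Ĝ)^(k) = I_c(Ĝ)^k`. -/
theorem stmt1 {n : ℕ} (K : Type*) [Field K] (G : SimpleGraph (Fin (n + 1)))
    (hx : ∀ y, ¬ G.Adj (Fin.last n) y)
    (Ghat : SimpleGraph (Fin n))
    (hGhat : ∀ i j : Fin n, Ghat.Adj i j ↔ G.Adj i.castSucc j.castSucc)
    (k : ℕ) (hk : 0 < k) :
    symbPow (compIdeal K G) k = compIdeal K G ^ k ↔
      symbPow (compIdeal K Ghat) k = compIdeal K Ghat ^ k := by
  rw [← aux_symbPow_eq_pow_iff (myE n K) (compIdeal K G) k,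
    aux_map_compIdeal K G hx Ghat hGhat]
  exact aux_key (compIdeal K Ghat) k hk
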